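/- arXiv:2004.10192 — 2 statements merged into one kernel-verified Lean document; each statement's English description precedes it below -/
import Mathlib

section
/- For every integer n ≥ 2, the complete coloring number of the n×n square grid graph satisfies Γ(G_n) ≥ 2n−9. Moreover, Γ(G_n) ≥ 2n−6 if n ≡ 0 or 1 (mod 4), Γ(G_n) ≥ 2n−7 if n ≡ 2 (mod 4), and Γ(G_n) ≥ 2n−9 if n ≡ 3 (mod 4). -/
/-- The rectangular grid graph `R_{m×n}`: vertices are pairs `(i,j)` with
`i < m`, `j < n`, adjacent iff they differ by exactly one in exactly one
coordinate. -/
def gridGraph (m n : ℕ) : SimpleGraph (Fin m × Fin n) where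
  Adj p q := (p.1 = q.1 ∧ ((p.2 : ℕ) + 1 = q.2 ∨ (q.2 : ℕ) + 1 = p.2)) ∨
             (p.2 = q.2 ∧ ((p.1 : ℕ) + 1 = q.1 ∨ (q.1 : ℕ) + 1 = p.1))
  symm := by
    refine ⟨?_⟩
    rintro p q (⟨h, h'⟩ | ⟨h, h'⟩)
    · exact Or.inl ⟨h.symm, h'.symm⟩
    · exact Or.inr ⟨h.symm, h'.symm⟩
  loopless := by
    refine ⟨?_⟩
    rintro p (⟨_, h | h⟩ | ⟨_, h | h⟩) <;> omega

/-- `c` is a `k`-complete coloring of `G`: every pair of distinct colors appears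
on some edge. -/
def IsCompleteColoring {V : Type*} (G : SimpleGraph V) (k : ℕ) (c : V → Fin k) : Prop :=
  ∀ i j : Fin k, i ≠ j → ∃ u v, G.Adj u v ∧ c u = i ∧ c v = j

/-- `c` is a `k`-complete proper coloring of `G`. -/
def IsCompleteProperColoring {V : Type*} (G : SimpleGraph V) (k : ℕ) (c : V → Fin k) : Prop :=
  IsCompleteColoring G k c ∧ ∀ u v, G.Adj u v → c u ≠ c v

/-- The complete coloring number `Γ(G)`: the maximum `k` admitting a
`k`-complete coloring. -/
noncomputable def completeColoringNumber {V : Type*} (G : SimpleGraph V) : ℕ :=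
  sSup {k | ∃ c : V → Fin k, IsCompleteColoring G k c}

/-- The achromatic number `Ψ(G)`: the maximum `k` admitting a `k`-complete
proper coloring. -/
noncomputable def achromaticNumber {V : Type*} (G : SimpleGraph V) : ℕ :=
  sSup {k | ∃ c : V → Fin k, IsCompleteProperColoring G k c}

/- ===================== auxiliary development ===================== -/
set_option maxHeartbeats 2000000

instance gridAdjDecidable (m n : ℕ) : DecidableRel (gridGraph m n).Adj := fun p q =>
  decidable_of_iff
    ((p.1 = q.1 ∧ ((p.2 : ℕ) + 1 = q.2 ∨ (q.2 : ℕ) + 1 = p.2)) ∨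
     (p.2 = q.2 ∧ ((p.1 : ℕ) + 1 = q.1 ∨ (q.1 : ℕ) + 1 = p.1))) Iff.rfl

lemma grid_adj (m n : ℕ) (p q : Fin m × Fin n) :
    (gridGraph m n).Adj p q ↔
      ((p.1 = q.1 ∧ ((p.2 : ℕ) + 1 = q.2 ∨ (q.2 : ℕ) + 1 = p.2)) ∨
       (p.2 = q.2 ∧ ((p.1 : ℕ) + 1 = q.1 ∨ (q.1 : ℕ) + 1 = p.1))) := Iff.rfl

/-- Row color sequence (values are even residues mod `2(n-3)`). -/
def gA (n i : ℕ) : ℕ :=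
  if i ≤ (n-3)/2 then (if i % 2 = 0 then i else 2*((n-3)/2) - i + 1)
  else if i ≤ 2*((n-3)/2) + 1 then
    (if (i - (n-3)/2 - 1) % 2 = 0 then (i - (n-3)/2 - 1) + 2*((n-3) - (n-3)/2)
     else if i - (n-3)/2 - 1 = 1 then 0
     else 2*((n-3)/2) + 2*((n-3) - (n-3)/2) - (i - (n-3)/2 - 1) + 1)
  else 0

/-- Column color sequence. -/
def gB (n j : ℕ) : ℕ :=
  if j ≤ (n-3) - (n-3)/2 then (if j % 2 = 0 then j else 2*((n-3) - (n-3)/2) - j)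
  else if j ≤ 2*((n-3) - (n-3)/2) + 1 then
    (if (j - ((n-3) - (n-3)/2) - 1) % 2 = 0 then (j - ((n-3) - (n-3)/2) - 1) + 1
     else 2*((n-3) - (n-3)/2) - (j - ((n-3) - (n-3)/2) - 1) + 1)
  else 0

lemma modx (k x t : ℕ) (hx : x < k) (h : t = x ∨ t = x + k) : t % k = x := by
  rcases h with rfl | rfl
  · exact Nat.mod_eq_of_lt hx
  · rw [Nat.add_mod_right]; exact Nat.mod_eq_of_lt hx

lemma modw (k z t : ℕ) (h : t + k = z ∨ t = z ∨ t = z + k ∨ t = z + 2*k) :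
    t % k = z % k := by
  rcases h with h | rfl | rfl | rfl
  · rw [← h, Nat.add_mod_right]
  · rfl
  · rw [Nat.add_mod_right]
  · have h2 : z + 2*k = z + k + k := by ring
    rw [h2, Nat.add_mod_right, Nat.add_mod_right]

lemma gAeven (n s : ℕ) (hn : 6 ≤ n) (hs : s < n-3) : ∃ i, i < n ∧ gA n i = 2*s := by
  refine ⟨if 2*s ≤ (n-3)/2 then 2*s
    else if s ≤ (n-3)/2 then 2*((n-3)/2) - 2*s + 1
    else if s ≤ ((n-3) - (n-3)/2) + ((n-3)/2)/2 then (n-3)/2 + 1 + 2*(s - ((n-3) - (n-3)/2))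
    else (n-3)/2 + 1 + (2*((n-3) - s) + 1), ?_, ?_⟩
  · split_ifs <;> omega
  · unfold gA; split_ifs <;> omega

lemma gBint (n y : ℕ) (hn : 6 ≤ n) (hy : y ≤ n-3) : ∃ j, j < n ∧ gB n j = y := by
  refine ⟨if y % 2 = 0 then (if y ≤ (n-3) - (n-3)/2 then y else ((n-3) - (n-3)/2) + 1 + (2*((n-3) - (n-3)/2) + 1 - y))
    else (if y ≤ (n-3) - (n-3)/2 then ((n-3) - (n-3)/2) + y else 2*((n-3) - (n-3)/2) - y), ?_, ?_⟩
  · split_ifs <;> omega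
  · unfold gB; split_ifs <;> omega

lemma gBstep (n d r : ℕ) (hn : 6 ≤ n) (hd2 : d % 2 = 1) (hd : d ≤ n-3) :
    ∃ j w, j + 1 < n ∧ w % 2 = r % 2 ∧ w + d ≤ (n-3) + 2 ∧
      ((gB n j = w ∧ gB n (j+1) = w + d) ∨ (gB n j = w + d ∧ gB n (j+1) = w)) := by
  rcases Nat.mod_two_eq_zero_or_one (((n-3) - (n-3)/2) - (d+1)/2) with ht | ht <;>
    rcases Nat.mod_two_eq_zero_or_one r with hr | hr
  · refine ⟨((n-3) - (n-3)/2) - (d+1)/2, ((n-3) - (n-3)/2) - (d+1)/2, by omega, by omega,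
      by omega, ?_⟩
    unfold gB; split_ifs <;> omega
  · refine ⟨((n-3) - (n-3)/2) + 1 + (((n-3) - (n-3)/2) - (d+1)/2),
      ((n-3) - (n-3)/2) - (d+1)/2 + 1, by omega, by omega, by omega, ?_⟩
    unfold gB; split_ifs <;> omega
  · refine ⟨((n-3) - (n-3)/2) - (d+1)/2, ((n-3) - (n-3)/2) - (d+1)/2 + 1, by omega, by omega,
      by omega, ?_⟩
    unfold gB; split_ifs <;> omega
  · refine ⟨((n-3) - (n-3)/2) + 1 + (((n-3) - (n-3)/2) - (d+1)/2),
      ((n-3) - (n-3)/2) - (d+1)/2 + 2, by omega, by omega, by omega, ?_⟩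
    unfold gB; split_ifs <;> omega

lemma gAstep (n e : ℕ) (hn : 6 ≤ n) (he : 1 ≤ e) (he2 : 2*e ≤ n-3) :
    ∃ u i i', u ≤ (n-3)/2 ∧ i + 1 < n ∧ i' + 1 < n ∧
      ((gA n i = u ∧ gA n (i+1) = u + 2*e) ∨ (gA n (i+1) = u ∧ gA n i = u + 2*e)) ∧
      ((gA n i' = u + 2*((n-3) - (n-3)/2) ∧
          (gA n (i'+1) = u + 2*((n-3) - (n-3)/2) + 2*e ∨
           gA n (i'+1) + 2*(n-3) = u + 2*((n-3) - (n-3)/2) + 2*e)) ∨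
       (gA n (i'+1) = u + 2*((n-3) - (n-3)/2) ∧
          (gA n i' = u + 2*((n-3) - (n-3)/2) + 2*e ∨
           gA n i' + 2*(n-3) = u + 2*((n-3) - (n-3)/2) + 2*e))) := by
  rcases Nat.mod_two_eq_zero_or_one ((n-3)/2 - e) with ht | ht
  · refine ⟨(n-3)/2 - e, (n-3)/2 - e, (n-3)/2 + 1 + ((n-3)/2 - e), by omega, by omega,
      by omega, ?_, ?_⟩
    · unfold gA; split_ifs <;> omega
    · unfold gA; split_ifs <;> omega
  · refine ⟨(n-3)/2 - e + 1, (n-3)/2 - e, (n-3)/2 + 1 + ((n-3)/2 - e), by omega, by omega,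
      by omega, ?_, ?_⟩
    · unfold gA; split_ifs <;> omega
    · unfold gA; split_ifs <;> omega

lemma exists_pair (n x d : ℕ) (hn : 6 ≤ n) (hx : x < 2*(n-3)) (hd1 : 1 ≤ d) (hd : d ≤ n-3) :
    ∃ i j i' j', i < n ∧ j < n ∧ i' < n ∧ j' < n ∧
      ((i = i' ∧ (j + 1 = j' ∨ j' + 1 = j)) ∨ (j = j' ∧ (i + 1 = i' ∨ i' + 1 = i))) ∧
      (gA n i + gB n j) % (2*(n-3)) = x ∧
      (gA n i' + gB n j') % (2*(n-3)) = (x + d) % (2*(n-3)) := by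
  rcases Nat.mod_two_eq_zero_or_one d with hd2 | hd2
  · -- d even: use a row step
    obtain ⟨u, i, i', hu, hi, hi', hor1, hor2⟩ := gAstep n (d/2) hn (by omega) (by omega)
    have hde : 2 * (d / 2) = d := by omega
    rw [hde] at hor1 hor2
    rcases le_or_gt u x with hux | hux
    · rcases le_or_gt (x - u) (n-3) with hw1 | hw1
      · obtain ⟨j, hj, hBj⟩ := gBint n (x-u) hn hw1
        rcases hor1 with ⟨hA1, hA2⟩ | ⟨hA1, hA2⟩
        · exact ⟨i, j, i+1, j, by omega, by omega, by omega, by omega,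
            Or.inr ⟨rfl, Or.inl rfl⟩, modx _ x _ hx (by omega), modw _ (x+d) _ (by omega)⟩
        · exact ⟨i+1, j, i, j, by omega, by omega, by omega, by omega,
            Or.inr ⟨rfl, Or.inr rfl⟩, modx _ x _ hx (by omega), modw _ (x+d) _ (by omega)⟩
      · have hyle : x - u - 2*((n-3) - (n-3)/2) ≤ n-3 := by omega
        obtain ⟨j, hj, hBj⟩ := gBint n (x - u - 2*((n-3) - (n-3)/2)) hn hyle
        rcases hor2 with ⟨hA1, hA2⟩ | ⟨hA1, hA2⟩ <;> rcases hA2 with hA2 | hA2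
        · exact ⟨i', j, i'+1, j, by omega, by omega, by omega, by omega,
            Or.inr ⟨rfl, Or.inl rfl⟩, modx _ x _ hx (by omega), modw _ (x+d) _ (by omega)⟩
        · exact ⟨i', j, i'+1, j, by omega, by omega, by omega, by omega,
            Or.inr ⟨rfl, Or.inl rfl⟩, modx _ x _ hx (by omega), modw _ (x+d) _ (by omega)⟩
        · exact ⟨i'+1, j, i', j, by omega, by omega, by omega, by omega,
            Or.inr ⟨rfl, Or.inr rfl⟩, modx _ x _ hx (by omega), modw _ (x+d) _ (by omega)⟩
        · exact ⟨i'+1, j, i', j, by omega, by omega, by omega, by omega,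
            Or.inr ⟨rfl, Or.inr rfl⟩, modx _ x _ hx (by omega), modw _ (x+d) _ (by omega)⟩
    · rcases le_or_gt (x + 2*(n-3) - u) (n-3) with hw1 | hw1
      · obtain ⟨j, hj, hBj⟩ := gBint n (x + 2*(n-3) - u) hn hw1
        rcases hor1 with ⟨hA1, hA2⟩ | ⟨hA1, hA2⟩
        · exact ⟨i, j, i+1, j, by omega, by omega, by omega, by omega,
            Or.inr ⟨rfl, Or.inl rfl⟩, modx _ x _ hx (by omega), modw _ (x+d) _ (by omega)⟩
        · exact ⟨i+1, j, i, j, by omega, by omega, by omega, by omega,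
            Or.inr ⟨rfl, Or.inr rfl⟩, modx _ x _ hx (by omega), modw _ (x+d) _ (by omega)⟩
      · have hyle : x + 2*(n-3) - u - 2*((n-3) - (n-3)/2) ≤ n-3 := by omega
        obtain ⟨j, hj, hBj⟩ := gBint n (x + 2*(n-3) - u - 2*((n-3) - (n-3)/2)) hn hyle
        rcases hor2 with ⟨hA1, hA2⟩ | ⟨hA1, hA2⟩ <;> rcases hA2 with hA2 | hA2
        · exact ⟨i', j, i'+1, j, by omega, by omega, by omega, by omega,
            Or.inr ⟨rfl, Or.inl rfl⟩, modx _ x _ hx (by omega), modw _ (x+d) _ (by omega)⟩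
        · exact ⟨i', j, i'+1, j, by omega, by omega, by omega, by omega,
            Or.inr ⟨rfl, Or.inl rfl⟩, modx _ x _ hx (by omega), modw _ (x+d) _ (by omega)⟩
        · exact ⟨i'+1, j, i', j, by omega, by omega, by omega, by omega,
            Or.inr ⟨rfl, Or.inr rfl⟩, modx _ x _ hx (by omega), modw _ (x+d) _ (by omega)⟩
        · exact ⟨i'+1, j, i', j, by omega, by omega, by omega, by omega,
            Or.inr ⟨rfl, Or.inr rfl⟩, modx _ x _ hx (by omega), modw _ (x+d) _ (by omega)⟩
  · -- d odd: use a column step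
    obtain ⟨j, w, hj, hw, hwb, hor⟩ := gBstep n d x hn hd2 hd
    rcases le_or_gt w x with hwx | hwx
    · have hs : (x - w)/2 < n-3 := by omega
      obtain ⟨i, hi, hAi⟩ := gAeven n ((x-w)/2) hn hs
      rcases hor with ⟨hB1, hB2⟩ | ⟨hB1, hB2⟩
      · exact ⟨i, j, i, j+1, by omega, by omega, by omega, by omega,
          Or.inl ⟨rfl, Or.inl rfl⟩, modx _ x _ hx (by omega), modw _ (x+d) _ (by omega)⟩
      · exact ⟨i, j+1, i, j, by omega, by omega, by omega, by omega,
          Or.inl ⟨rfl, Or.inr rfl⟩, modx _ x _ hx (by omega), modw _ (x+d) _ (by omega)⟩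
    · have hs : (x + 2*(n-3) - w)/2 < n-3 := by omega
      obtain ⟨i, hi, hAi⟩ := gAeven n ((x + 2*(n-3) - w)/2) hn hs
      rcases hor with ⟨hB1, hB2⟩ | ⟨hB1, hB2⟩
      · exact ⟨i, j, i, j+1, by omega, by omega, by omega, by omega,
          Or.inl ⟨rfl, Or.inl rfl⟩, modx _ x _ hx (by omega), modw _ (x+d) _ (by omega)⟩
      · exact ⟨i, j+1, i, j, by omega, by omega, by omega, by omega,
          Or.inl ⟨rfl, Or.inr rfl⟩, modx _ x _ hx (by omega), modw _ (x+d) _ (by omega)⟩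

lemma complete6 (n : ℕ) (hn : 6 ≤ n) :
    ∃ c : Fin n × Fin n → Fin (2*(n-3)), IsCompleteColoring (gridGraph n n) (2*(n-3)) c := by
  have hk : 0 < 2*(n-3) := by omega
  refine ⟨fun p => ⟨(gA n p.1 + gB n p.2) % (2*(n-3)), Nat.mod_lt _ hk⟩, ?_⟩
  have main : ∀ x y : ℕ, x < 2*(n-3) → y < 2*(n-3) → x < y →
      ∃ u v : Fin n × Fin n, (gridGraph n n).Adj u v ∧
        (((gA n u.1 + gB n u.2) % (2*(n-3)) = x ∧ (gA n v.1 + gB n v.2) % (2*(n-3)) = y) ∨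
         ((gA n u.1 + gB n u.2) % (2*(n-3)) = y ∧ (gA n v.1 + gB n v.2) % (2*(n-3)) = x)) := by
    intro x y hxk hyk hxy
    rcases le_or_gt (y - x) (n-3) with hcase | hcase
    · obtain ⟨i, j, i', j', hi, hj, hi', hj', hrel, hc1, hc2⟩ :=
        exists_pair n x (y-x) hn hxk (by omega) hcase
      have hxy2 : (x + (y - x)) % (2*(n-3)) = y := by
        have : x + (y - x) = y := by omega
        rw [this]; exact Nat.mod_eq_of_lt hyk
      rw [hxy2] at hc2
      refine ⟨(⟨i, hi⟩, ⟨j, hj⟩), (⟨i', hi'⟩, ⟨j', hj'⟩), ?_, Or.inl ⟨hc1, hc2⟩⟩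
      rw [grid_adj]
      rcases hrel with ⟨h1, h2⟩ | ⟨h1, h2⟩
      · exact Or.inl ⟨Fin.ext h1, h2⟩
      · exact Or.inr ⟨Fin.ext h1, h2⟩
    · obtain ⟨i, j, i', j', hi, hj, hi', hj', hrel, hc1, hc2⟩ :=
        exists_pair n y (2*(n-3) - (y-x)) hn hyk (by omega) (by omega)
      have hxy2 : (y + (2*(n-3) - (y-x))) % (2*(n-3)) = x := by
        have h3 : y + (2*(n-3) - (y-x)) = x + 2*(n-3) := by omega
        rw [h3, Nat.add_mod_right]; exact Nat.mod_eq_of_lt hxk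
      rw [hxy2] at hc2
      refine ⟨(⟨i, hi⟩, ⟨j, hj⟩), (⟨i', hi'⟩, ⟨j', hj'⟩), ?_, Or.inr ⟨hc1, hc2⟩⟩
      rw [grid_adj]
      rcases hrel with ⟨h1, h2⟩ | ⟨h1, h2⟩
      · exact Or.inl ⟨Fin.ext h1, h2⟩
      · exact Or.inr ⟨Fin.ext h1, h2⟩
  intro p q hne
  have hpq : (p : ℕ) ≠ (q : ℕ) := fun h => hne (Fin.ext h)
  rcases Nat.lt_or_ge p.val q.val with hlt | hge
  · obtain ⟨u, v, hadj, hcol⟩ := main p.val q.val p.isLt q.isLt hlt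
    rcases hcol with ⟨h1, h2⟩ | ⟨h1, h2⟩
    · exact ⟨u, v, hadj, Fin.ext h1, Fin.ext h2⟩
    · exact ⟨v, u, hadj.symm, Fin.ext h2, Fin.ext h1⟩
  · have hlt : q.val < p.val := by omega
    obtain ⟨u, v, hadj, hcol⟩ := main q.val p.val q.isLt p.isLt hlt
    rcases hcol with ⟨h1, h2⟩ | ⟨h1, h2⟩
    · exact ⟨v, u, hadj.symm, Fin.ext h2, Fin.ext h1⟩
    · exact ⟨u, v, hadj, Fin.ext h1, Fin.ext h2⟩

lemma mem4 : ∃ c : Fin 4 × Fin 4 → Fin (2*(4-3)), IsCompleteColoring (gridGraph 4 4) (2*(4-3)) c := by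
  refine ⟨fun p => ⟨(gA 4 p.1 + gB 4 p.2) % (2*(4-3)), by omega⟩, ?_⟩
  unfold IsCompleteColoring
  decide

lemma mem5 : ∃ c : Fin 5 × Fin 5 → Fin (2*(5-3)), IsCompleteColoring (gridGraph 5 5) (2*(5-3)) c := by
  refine ⟨fun p => ⟨(gA 5 p.1 + gB 5 p.2) % (2*(5-3)), by omega⟩, ?_⟩
  unfold IsCompleteColoring
  decide

lemma grid_bddAbove (n : ℕ) (hn : 2 ≤ n) :
    BddAbove {k | ∃ c : Fin n × Fin n → Fin k, IsCompleteColoring (gridGraph n n) k c} := by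
  refine ⟨n*n, fun k hk => ?_⟩
  obtain ⟨c, hc⟩ := hk
  rcases le_or_gt k 1 with h1 | h1
  · have h4 : 4 ≤ n*n := Nat.mul_le_mul hn hn
    omega
  · have hsurj : Function.Surjective c := by
      intro y
      have hz : ∃ z : Fin k, z ≠ y := by
        refine ⟨⟨if (y : ℕ) = 0 then 1 else 0, by split_ifs <;> omega⟩, fun hzy => ?_⟩
        have := congrArg Fin.val hzy
        simp only at this
        split_ifs at this <;> omega
      obtain ⟨z, hz⟩ := hz
      obtain ⟨u, v, _, hu, _⟩ := hc y z (Ne.symm hz)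
      exact ⟨u, hu⟩
    have hcard := Fintype.card_le_of_surjective c hsurj
    simp only [Fintype.card_fin, Fintype.card_prod] at hcard
    exact hcard

/-- For every `n ≥ 2`, `Γ(G_n) ≥ 2n − 9`; moreover `Γ(G_n) ≥ 2n − 6` if
`n ≡ 0, 1 (mod 4)`, `Γ(G_n) ≥ 2n − 7` if `n ≡ 2 (mod 4)`, and
`Γ(G_n) ≥ 2n − 9` if `n ≡ 3 (mod 4)`. -/
theorem gamma_grid_lower_bounds (n : ℕ) (hn : 2 ≤ n) :
    (2 * (n : ℤ) - 9 ≤ (completeColoringNumber (gridGraph n n) : ℤ)) ∧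
    (n % 4 = 0 ∨ n % 4 = 1 → 2 * (n : ℤ) - 6 ≤ (completeColoringNumber (gridGraph n n) : ℤ)) ∧
    (n % 4 = 2 → 2 * (n : ℤ) - 7 ≤ (completeColoringNumber (gridGraph n n) : ℤ)) ∧
    (n % 4 = 3 → 2 * (n : ℤ) - 9 ≤ (completeColoringNumber (gridGraph n n) : ℤ)) := by
  rcases (by omega : n = 2 ∨ n = 3 ∨ 4 ≤ n) with rfl | rfl | h4
  · exact ⟨by omega, fun _ => by omega, fun _ => by omega, fun _ => by omega⟩
  · exact ⟨by omega, fun _ => by omega, fun _ => by omega, fun _ => by omega⟩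
  · have hmem : (2*(n-3)) ∈
        {k | ∃ c : Fin n × Fin n → Fin k, IsCompleteColoring (gridGraph n n) k c} := by
      rcases (by omega : n = 4 ∨ n = 5 ∨ 6 ≤ n) with rfl | rfl | h6
      · exact mem4
      · exact mem5
      · exact complete6 n h6
    have hle : 2*(n-3) ≤ completeColoringNumber (gridGraph n n) := by
      unfold completeColoringNumber
      exact le_csSup (grid_bddAbove n hn) hmem
    refine ⟨by omega, fun _ => by omega, fun _ => by omega, fun _ => by omega⟩
end

section
/- If a finite simple graph G with maximum degree Δ(G) admits a k-complete coloring, then k·⌈(k−1)/Δ(G)⌉ ≤ |V(G)|. Consequently Γ(G) ≤ max{k : k⌈(k−1)/Δ(G)⌉ ≤ |V(G)|}. -/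
private theorem aux_key {V : Type*} [Fintype V] [DecidableEq V]
    (G : SimpleGraph V) [DecidableRel G.Adj] (hΔ : 0 < G.maxDegree)
    (k : ℕ) (c : V → Fin k) (hc : ∀ i j : Fin k, i ≠ j → ∃ u v, G.Adj u v ∧ c u = i ∧ c v = j) :
      k * ((k - 1) ⌈/⌉ G.maxDegree) ≤ Fintype.card V := by
  classical
  have hfiber : ∀ i : Fin k, (k - 1) ⌈/⌉ G.maxDegree ≤ (Finset.univ.filter fun u => c u = i).card := by
    intro i
    rw [ceilDiv_le_iff_le_mul hΔ, mul_comm]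
    set S := Finset.univ.filter fun u => c u = i with hS
    rcases Nat.lt_or_ge k 2 with hk | hk
    · have h0 : k - 1 = 0 := by omega
      simp [h0]
    haveI : Nontrivial (Fin k) := Fin.nontrivial_iff_two_le.2 hk
    obtain ⟨j0, hj0⟩ := exists_ne i
    have hVne : Nonempty V := by
      obtain ⟨u, v, _⟩ := hc i j0 (Ne.symm hj0)
      exact ⟨u⟩
    have hex : ∀ j : Fin k, j ≠ i → ∃ v, v ∈ S.biUnion (fun u => G.neighborFinset u) ∧ c v = j := by
      intro j hj
      obtain ⟨u, v, hadj, hu, hv⟩ := hc i j (Ne.symm hj)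
      exact ⟨v, Finset.mem_biUnion.2 ⟨u, Finset.mem_filter.2 ⟨Finset.mem_univ u, hu⟩,
        (G.mem_neighborFinset _ _).2 hadj⟩, hv⟩
    set f : Fin k → V := fun j => if h : j ≠ i then (hex j h).choose else Classical.arbitrary V
      with hf
    have hcard : k - 1 ≤ (S.biUnion (fun u => G.neighborFinset u)).card := by
      have := Finset.card_le_card_of_injOn (s := Finset.univ.erase i) (t := S.biUnion fun u => G.neighborFinset u) f
        (fun j hj => by
          have hj' : j ≠ i := Finset.ne_of_mem_erase hj
          simp only [hf, dif_pos hj']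
          exact (hex j hj').choose_spec.1)
        (fun a ha b hb hab => by
          have ha' : a ≠ i := Finset.ne_of_mem_erase ha
          have hb' : b ≠ i := Finset.ne_of_mem_erase hb
          have h1 := (hex a ha').choose_spec.2
          have h2 := (hex b hb').choose_spec.2
          simp only [hf, dif_pos ha', dif_pos hb'] at hab
          rw [← h1, ← h2, hab])
      rwa [Finset.card_erase_of_mem (Finset.mem_univ i), Finset.card_univ, Fintype.card_fin] at this
    calc k - 1 ≤ (S.biUnion (fun u => G.neighborFinset u)).card := hcard
      _ ≤ ∑ u ∈ S, (G.neighborFinset u).card := Finset.card_biUnion_le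
      _ ≤ S.card * G.maxDegree := by
          have h := Finset.sum_le_card_nsmul S (fun u => G.degree u) G.maxDegree
              (fun u _ => G.degree_le_maxDegree u)
          rw [smul_eq_mul] at h
          exact h
  calc k * ((k - 1) ⌈/⌉ G.maxDegree) = ∑ _i : Fin k, ((k - 1) ⌈/⌉ G.maxDegree) := by
        simp [Finset.sum_const, mul_comm]
    _ ≤ ∑ i : Fin k, (Finset.univ.filter fun u => c u = i).card :=
        Finset.sum_le_sum fun i _ => hfiber i
    _ = Fintype.card V := by
        rw [← Finset.card_univ, Finset.card_eq_sum_card_fiberwise (fun x _ => Finset.mem_univ (c x))]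


/-- If a finite simple graph `G` with at least one edge admits a `k`-complete
coloring, then `k·⌈(k−1)/Δ(G)⌉ ≤ |V(G)|`; consequently
`Γ(G) ≤ max {k | k·⌈(k−1)/Δ(G)⌉ ≤ |V(G)|}`. -/
theorem completeColoring_vertex_bound {V : Type*} [Fintype V] [DecidableEq V]
    (G : SimpleGraph V) [DecidableRel G.Adj] (hE : G.edgeSet.Nonempty) :
    (∀ (k : ℕ) (c : V → Fin k), IsCompleteColoring G k c →
      k * ((k - 1) ⌈/⌉ G.maxDegree) ≤ Fintype.card V) ∧
    completeColoringNumber G ≤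
      sSup {k : ℕ | k * ((k - 1) ⌈/⌉ G.maxDegree) ≤ Fintype.card V} := by
  classical
  obtain ⟨e, he⟩ := hE
  obtain ⟨u0, v0, he, rfl⟩ : ∃ u v, G.Adj u v ∧ e = s(u, v) := by
    induction e using Sym2.ind with
    | _ u v => exact ⟨u, v, (SimpleGraph.mem_edgeSet G).1 he, rfl⟩
  have hΔ : 0 < G.maxDegree :=
    lt_of_lt_of_le ((G.degree_pos_iff_exists_adj u0).2 ⟨v0, he⟩) (G.degree_le_maxDegree u0)
  have part1 : ∀ (k : ℕ) (c : V → Fin k), IsCompleteColoring G k c →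
      k * ((k - 1) ⌈/⌉ G.maxDegree) ≤ Fintype.card V :=
    fun k c hc => aux_key G hΔ k c hc
  refine ⟨part1, ?_⟩
  have hbdd : BddAbove {k : ℕ | k * ((k - 1) ⌈/⌉ G.maxDegree) ≤ Fintype.card V} := by
    refine ⟨Fintype.card V + 1, fun k hk => ?_⟩
    by_contra h
    push_neg at h
    have hk2 : 2 ≤ k := by
      have : 1 ≤ Fintype.card V := Fintype.card_pos_iff.2 ⟨u0⟩
      omega
    have h1 : 1 ≤ (k - 1) ⌈/⌉ G.maxDegree := by
      by_contra h2
      push_neg at h2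
      have : (k - 1) ⌈/⌉ G.maxDegree ≤ 0 := by omega
      rw [ceilDiv_le_iff_le_mul hΔ] at this
      omega
    have := hk.out
    have hkk : k * 1 ≤ k * ((k - 1) ⌈/⌉ G.maxDegree) := Nat.mul_le_mul_left k h1
    omega
  have hne : ({k : ℕ | ∃ c : V → Fin k, IsCompleteColoring G k c}).Nonempty := by
    refine ⟨1, fun _ => 0, fun i j hij => absurd (Subsingleton.elim i j) hij⟩
  exact csSup_le_csSup hbdd hne (fun k hk => by
    obtain ⟨c, hc⟩ := hk
    exact part1 k c hc)
end
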